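/- There do not exist an integer n ≥ 1 and positive real numbers α₁, …, αₙ and τ₁, …, τₙ such that f(t) = Σᵢ₌₁ⁿ αᵢ · h(t/τᵢ) for all t > 0. That is, the slope gap distribution of the balanced ten-tile origami is not a finite sum of scaled Hall distributions. -/

import Mathlib

/-- The inverse hyperbolic tangent. -/
noncomputable def artanh (x : ℝ) : ℝ := (1 / 2) * Real.log ((1 + x) / (1 - x))

/-- `θ(t) = artanh √(1 - 1/t)`. -/
noncomputable def tenTheta (t : ℝ) : ℝ := artanh (Real.sqrt (1 - 1 / t))

/-- The piecewise function `g` with `f(t) = (8/(33 t²)) g(t)` for `t ≥ 1`. -/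
noncomputable def tenG (t : ℝ) : ℝ :=
  if t < 2 then 4 * Real.log t
  else if t < 3 then 12 * Real.log t - 8 * Real.log 2
  else if t < 4 then 15 * Real.log t - 8 * Real.log 2 - 3 * Real.log 3
  else if t < 16 / 3 then
    16 * Real.log t - 10 * Real.log 2 - 3 * Real.log 3 - 8 * tenTheta (t / 4)
  else if t < 6 then
    16 * Real.log t - 10 * Real.log 2 - 3 * Real.log 3 - 8 * tenTheta (t / 4)
      - 4 * tenTheta (3 * t / 16)
  else if t < 8 then
    12 * Real.log t - 8 * Real.log 2 + Real.log 3 - 8 * tenTheta (t / 4)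
      - 4 * tenTheta (t / 6)
  else if t < 9 then
    10 * Real.log t - 2 * Real.log 2 - Real.log 3 - 8 * tenTheta (t / 4)
      - 12 * tenTheta (t / 8)
  else if t < 32 / 3 then
    10 * Real.log t - 4 * Real.log 2 - Real.log 3 - 8 * tenTheta (t / 4)
      - 8 * tenTheta (t / 8)
  else if t < 12 then
    10 * Real.log t - 4 * Real.log 2 - Real.log 3 - 8 * tenTheta (t / 4)
      - 8 * tenTheta (t / 8) - 4 * tenTheta (3 * t / 32)
  else if t < 16 then
    9 * Real.log t - 4 * Real.log 2 - 8 * tenTheta (t / 4) - 8 * tenTheta (t / 8)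
      - 4 * tenTheta (t / 12)
  else
    9 * Real.log t - 4 * Real.log 2 - Real.log 3 - 8 * tenTheta (t / 4)
      - 8 * tenTheta (t / 8) - 2 * tenTheta (t / 12)

/-- The slope gap distribution pdf of the balanced ten-tile origami. -/
noncomputable def tenTilePdf (t : ℝ) : ℝ :=
  if t < 1 then 0 else 8 / (33 * t ^ 2) * tenG t

/-- The Hall distribution pdf. -/
noncomputable def hallPdf (t : ℝ) : ℝ :=
  if t < 1 then 0
  else if t < 4 then 2 * Real.log t / t ^ 2
  else 2 * Real.log t / t ^ 2 - 4 / t ^ 2 * artanh (Real.sqrt (1 - 4 / t))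

lemma artanh_nonneg {x : ℝ} (h0 : 0 ≤ x) (h1 : x < 1) : 0 ≤ artanh x := by
  have : (1:ℝ) ≤ (1 + x) / (1 - x) := by
    rw [le_div_iff₀ (by linarith)]; linarith
  have := Real.log_nonneg this
  unfold artanh; linarith

lemma artanh_le_div {x : ℝ} (h0 : 0 ≤ x) (h1 : x < 1) : artanh x ≤ x / (1 - x) := by
  have h1x : (0:ℝ) < 1 - x := by linarith
  have hpos : (0:ℝ) < (1 + x) / (1 - x) := by positivity
  have := Real.log_le_sub_one_of_pos hpos
  have h2 : (1 + x) / (1 - x) - 1 = 2 * x / (1 - x) := by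
    field_simp; ring
  unfold artanh
  rw [h2] at this
  have : Real.log ((1 + x) / (1 - x)) ≤ 2 * (x / (1 - x)) := by
    rw [mul_div_assoc] at this; linarith
  linarith

lemma half_le_artanh {x : ℝ} (h0 : 0 ≤ x) (h1 : x < 1) : x / 2 ≤ artanh x := by
  have h1x : (0:ℝ) < 1 - x := by linarith
  have hlog1 : Real.log (1 - x) ≤ -x := by
    have := Real.log_le_sub_one_of_pos h1x; linarith
  have hlog2 : (0:ℝ) ≤ Real.log (1 + x) := Real.log_nonneg (by linarith)
  have hd : Real.log ((1 + x) / (1 - x)) = Real.log (1 + x) - Real.log (1 - x) :=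
    Real.log_div (by linarith) (by linarith)
  unfold artanh; rw [hd]; linarith

lemma artanh_sqrt {y : ℝ} (h0 : 0 ≤ y) (h1 : y < 1) :
    artanh (Real.sqrt y) = Real.log (1 + Real.sqrt y) - (1/2) * Real.log (1 - y) := by
  have hs0 : 0 ≤ Real.sqrt y := Real.sqrt_nonneg y
  have hs1 : Real.sqrt y < 1 := by
    rw [show (1:ℝ) = Real.sqrt 1 by simp]
    exact Real.sqrt_lt_sqrt h0 h1
  have hsq : Real.sqrt y ^ 2 = y := Real.sq_sqrt h0
  have h1s : (0:ℝ) < 1 - Real.sqrt y := by linarith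
  have key : (1 + Real.sqrt y) / (1 - Real.sqrt y) = (1 + Real.sqrt y)^2 / (1 - y) := by
    have hy : 1 - y = (1 - Real.sqrt y) * (1 + Real.sqrt y) := by nlinarith
    rw [hy]; rw [sq]; field_simp
  unfold artanh
  rw [key, Real.log_div (by positivity) (by linarith), Real.log_pow]
  push_cast; ring

lemma hallPdf_of_le_one {x : ℝ} (hx : x ≤ 1) : hallPdf x = 0 := by
  unfold hallPdf
  rcases lt_or_eq_of_le hx with h | h
  · simp [h]
  · subst h; norm_num

lemma hallPdf_of_lt_four {x : ℝ} (h1 : 1 ≤ x) (h4 : x < 4) :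
    hallPdf x = 2 * Real.log x / x ^ 2 := by
  unfold hallPdf
  rw [if_neg (by linarith), if_pos h4]

lemma tenTheta_div_four {x : ℝ} (hx : x ≠ 0) :
    tenTheta (x / 4) = artanh (Real.sqrt (1 - 4 / x)) := by
  unfold tenTheta
  rw [one_div_div]

lemma hallPdf_of_four_le {x : ℝ} (h4 : 4 ≤ x) :
    hallPdf x = 2 * Real.log x / x ^ 2 - 4 / x ^ 2 * tenTheta (x / 4) := by
  unfold hallPdf
  rw [if_neg (by linarith), if_neg (by linarith), tenTheta_div_four (by linarith)]

lemma hallPdf_pos {x : ℝ} (hx : 1 < x) : 0 < hallPdf x := by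
  rcases lt_or_ge x 4 with h4 | h4
  · rw [hallPdf_of_lt_four hx.le h4]
    have := Real.log_pos hx
    positivity
  · rw [hallPdf_of_four_le h4, tenTheta_div_four (by linarith)]
    have hx0 : (0:ℝ) < x := by linarith
    have hy0 : (0:ℝ) ≤ 1 - 4 / x := by
      rw [sub_nonneg, div_le_one hx0]; linarith
    have hy1 : 1 - 4 / x < 1 := by
      have : 0 < 4 / x := by positivity
      linarith
    have hart := artanh_sqrt hy0 hy1
    set s := Real.sqrt (1 - 4 / x) with hs
    have hs1 : s < 1 := by
      have := Real.sqrt_lt_sqrt hy0 hy1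
      rw [hs]; simpa using this
    have hs0 : 0 ≤ s := Real.sqrt_nonneg _
    have h14 : (1:ℝ) - (1 - 4 / x) = 4 / x := by ring
    rw [h14] at hart
    have hlog4 : Real.log (4 / x) = Real.log 4 - Real.log x :=
      Real.log_div (by norm_num) (by linarith)
    have hlt : Real.log (1 + s) < Real.log 2 :=
      Real.log_lt_log (by linarith) (by linarith)
    have hlog42 : Real.log 4 = 2 * Real.log 2 := by
      rw [show (4:ℝ) = 2 ^ 2 by norm_num, Real.log_pow]; push_cast; ring
    have key : 0 < 2 * Real.log x - 4 * artanh s := by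
      rw [hart, hlog4, hlog42]; linarith
    have hx2 : (0:ℝ) < x ^ 2 := by positivity
    have : 2 * Real.log x / x ^ 2 - 4 / x ^ 2 * artanh s
        = (2 * Real.log x - 4 * artanh s) / x ^ 2 := by ring
    rw [this]
    positivity

lemma hallPdf_nonneg (x : ℝ) : 0 ≤ hallPdf x := by
  rcases le_or_gt x 1 with h | h
  · rw [hallPdf_of_le_one h]
  · exact (hallPdf_pos h).le

lemma tenTheta_lower {s : ℝ} (h1 : 1 < s) (h2 : s ≤ 2) :
    Real.sqrt ((s - 1) / 2) / 2 ≤ tenTheta s := by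
  have hs0 : (0:ℝ) < s := by linarith
  have hy0 : (0:ℝ) ≤ 1 - 1 / s := by
    rw [sub_nonneg, div_le_one hs0]; linarith
  have hy1 : 1 - 1 / s < 1 := by
    have : 0 < 1 / s := by positivity
    linarith
  have hx0 : 0 ≤ Real.sqrt (1 - 1 / s) := Real.sqrt_nonneg _
  have hx1 : Real.sqrt (1 - 1 / s) < 1 := by
    have := Real.sqrt_lt_sqrt hy0 hy1
    simpa using this
  have hmono : Real.sqrt ((s - 1) / 2) ≤ Real.sqrt (1 - 1 / s) := by
    apply Real.sqrt_le_sqrt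
    rw [show 1 - 1 / s = (s - 1) / s by field_simp]
    apply div_le_div_of_nonneg_left (by linarith) hs0 h2
  have := half_le_artanh hx0 hx1
  unfold tenTheta
  linarith

lemma tenTheta_upper {s : ℝ} (h1 : 1 < s) (h2 : s ≤ 5 / 4) :
    tenTheta s ≤ 2 * Real.sqrt (s - 1) := by
  have hs0 : (0:ℝ) < s := by linarith
  have hy0 : (0:ℝ) ≤ 1 - 1 / s := by
    rw [sub_nonneg, div_le_one hs0]; linarith
  have hy1 : 1 - 1 / s < 1 := by
    have : 0 < 1 / s := by positivity
    linarith
  have hx0 : 0 ≤ Real.sqrt (1 - 1 / s) := Real.sqrt_nonneg _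
  have hx1 : Real.sqrt (1 - 1 / s) < 1 := by
    have := Real.sqrt_lt_sqrt hy0 hy1
    simpa using this
  have hle : Real.sqrt (1 - 1 / s) ≤ Real.sqrt (s - 1) := by
    apply Real.sqrt_le_sqrt
    rw [show 1 - 1 / s = (s - 1) / s by field_simp]
    rw [div_le_iff₀ hs0]
    nlinarith
  have hhalf : Real.sqrt (1 - 1 / s) ≤ 1 / 2 := by
    calc Real.sqrt (1 - 1/s) ≤ Real.sqrt (s-1) := hle
    _ ≤ Real.sqrt (1/4) := Real.sqrt_le_sqrt (by linarith)
    _ = 1/2 := by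
        rw [show (1:ℝ)/4 = (1/2)^2 by norm_num, Real.sqrt_sq (by norm_num)]
  have hart := artanh_le_div hx0 hx1
  have : Real.sqrt (1 - 1 / s) / (1 - Real.sqrt (1 - 1 / s))
      ≤ 2 * Real.sqrt (1 - 1 / s) := by
    rw [div_le_iff₀ (by linarith)]
    nlinarith
  unfold tenTheta
  calc artanh (Real.sqrt (1 - 1/s)) ≤ _ := hart
  _ ≤ 2 * Real.sqrt (1 - 1/s) := this
  _ ≤ 2 * Real.sqrt (s - 1) := by linarith

lemma tenTilePdf_one_two {t : ℝ} (h1 : 1 ≤ t) (h2 : t < 2) :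
    tenTilePdf t = 8 / (33 * t ^ 2) * (4 * Real.log t) := by
  unfold tenTilePdf tenG
  rw [if_neg (by linarith), if_pos h2]

lemma tenTilePdf_main {t : ℝ} (h1 : 16 / 3 < t) (h2 : t < 6) :
    tenTilePdf t = 8 / (33 * t ^ 2) *
      (16 * Real.log t - 10 * Real.log 2 - 3 * Real.log 3 - 8 * tenTheta (t / 4)
        - 4 * tenTheta (3 * t / 16)) := by
  unfold tenTilePdf tenG
  rw [if_neg (by linarith), if_neg (by linarith), if_neg (by linarith),
    if_neg (by linarith), if_neg (by linarith), if_pos h2]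

lemma hall_term {a c t : ℝ} (ha : 0 ≤ a) (hc : 0 < c) (ht : 0 < t)
    (hone : 1 ≤ t / c) (hfour : t / c < 4) :
    a * hallPdf (t / c) = 2 * Real.log t / t ^ 2 * (a * c ^ 2)
      - 2 / t ^ 2 * (a * c ^ 2 * Real.log c) := by
  rw [hallPdf_of_lt_four hone hfour, Real.log_div ht.ne' hc.ne']
  field_simp

lemma keyAlgebra {lt l2 l3 th4 th316 B L t : ℝ} (ht : t ≠ 0)
    (h : 8 / (33 * t ^ 2) * (16 * lt - 10 * l2 - 3 * l3 - 8 * th4 - 4 * th316)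
      = 16 / 33 * (2 * lt / t ^ 2 - 4 / t ^ 2 * th4)
        + (2 * lt / t ^ 2 * B - 2 / t ^ 2 * L)) :
    th316 = (3 - 33 / 16 * B) * lt + (33 / 16 * L - 5 / 2 * l2 - 3 / 4 * l3) := by
  have h2 : (t:ℝ) ^ 2 ≠ 0 := pow_ne_zero 2 ht
  have hw : (33:ℝ) * t ^ 2 * t ^ 2 ≠ 0 := mul_ne_zero (mul_ne_zero (by norm_num) h2) h2
  field_simp at h
  linarith

set_option maxHeartbeats 2000000 in
/-- The slope gap distribution of the balanced ten-tile origami is not a finite sum of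
scaled Hall distributions. -/
theorem tenTile_not_sum_of_halls :
    ¬ ∃ (n : ℕ) (α τ : Fin n → ℝ), 1 ≤ n ∧ (∀ i, 0 < α i) ∧ (∀ i, 0 < τ i) ∧
      ∀ t : ℝ, 0 < t → tenTilePdf t = ∑ i, α i * hallPdf (t / τ i) := by
  rintro ⟨n, α, τ, hn, hα, hτ, heq⟩
  classical
  have hne : Nonempty (Fin n) := Fin.pos_iff_nonempty.mp (by omega)
  have huniv : (Finset.univ : Finset (Fin n)).Nonempty := Finset.univ_nonempty
  obtain ⟨i0, hi0⟩ := id huniv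
  -- Step A : all τ i ≥ 1
  have hτ1 : ∀ i, 1 ≤ τ i := by
    intro j
    by_contra hj
    push_neg at hj
    have hτj := hτ j
    set t := (τ j + 1) / 2 with ht
    have htpos : 0 < t := by rw [ht]; linarith
    have ht1 : t < 1 := by rw [ht]; linarith
    have htj : τ j < t := by rw [ht]; linarith
    have h0 : tenTilePdf t = 0 := by unfold tenTilePdf; rw [if_pos ht1]
    have hsum := heq t htpos
    rw [h0] at hsum
    have hpos : 0 < ∑ i, α i * hallPdf (t / τ i) := by
      apply Finset.sum_pos'
      · intro i _
        exact mul_nonneg (hα i).le (hallPdf_nonneg _)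
      · exact ⟨j, Finset.mem_univ j,
          mul_pos (hα j) (hallPdf_pos ((one_lt_div (hτ j)).mpr htj))⟩
    linarith
  -- Step B : the total weight at scale 1 is 16/33
  set A := ∑ i ∈ Finset.univ.filter (fun i => τ i = 1), α i with hAdef
  have hA : A = 16 / 33 := by
    set m := Finset.univ.inf' huniv (fun i => if 1 < τ i then min (τ i) 2 else 2)
      with hmdef
    have hm1 : 1 < m := by
      rw [hmdef, Finset.lt_inf'_iff]
      intro i _
      split
      · exact lt_min (by assumption) one_lt_two
      · exact one_lt_two
    have hm2 : m ≤ 2 := by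
      refine le_trans (Finset.inf'_le _ hi0) ?_
      split
      · exact min_le_right _ _
      · exact le_rfl
    have hmle : ∀ i, τ i ≠ 1 → m ≤ τ i := by
      intro i hi
      have h1i : 1 < τ i := lt_of_le_of_ne (hτ1 i) (Ne.symm hi)
      refine le_trans (Finset.inf'_le _ (Finset.mem_univ i)) ?_
      rw [if_pos h1i]
      exact min_le_left _ _
    set t := (1 + m) / 2 with htdef
    have ht1 : 1 < t := by rw [htdef]; linarith
    have htm : t < m := by rw [htdef]; linarith
    have ht2 : t < 2 := by linarith
    have hsum := heq t (by linarith)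
    rw [tenTilePdf_one_two ht1.le ht2] at hsum
    rw [← Finset.sum_filter_add_sum_filter_not Finset.univ (fun i => τ i = 1)] at hsum
    have e1 : ∑ i ∈ Finset.univ.filter (fun i => τ i = 1), α i * hallPdf (t / τ i)
        = A * (2 * Real.log t / t ^ 2) := by
      rw [hAdef, Finset.sum_mul]
      refine Finset.sum_congr rfl fun i hi => ?_
      rw [Finset.mem_filter] at hi
      rw [hi.2, div_one, hallPdf_of_lt_four ht1.le (by linarith)]
    have e2 : ∑ i ∈ Finset.univ.filter (fun i => ¬ τ i = 1), α i * hallPdf (t / τ i)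
        = 0 := by
      apply Finset.sum_eq_zero
      intro i hi
      rw [Finset.mem_filter] at hi
      have hle : t / τ i ≤ 1 := by
        rw [div_le_one (hτ i)]
        exact le_trans htm.le (hmle i hi.2)
      rw [hallPdf_of_le_one hle, mul_zero]
    rw [e1, e2, add_zero] at hsum
    have hlt : 0 < Real.log t := Real.log_pos ht1
    have ht0 : (0:ℝ) < t := by linarith
    have hX : (2 * Real.log t / t ^ 2) ≠ 0 := by positivity
    have h8 : 8 / (33 * t ^ 2) * (4 * Real.log t)
        = (16:ℝ)/33 * (2 * Real.log t / t ^ 2) := by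
      field_simp
      ring
    rw [h8] at hsum
    exact (mul_right_cancel₀ hX hsum.symm)
  -- Step C : every scale is 1 or at least 2
  have hC : ∀ i, τ i = 1 ∨ 2 ≤ τ i := by
    by_contra hc
    push_neg at hc
    obtain ⟨j, hj1, hj2⟩ := hc
    have hQne : (Finset.univ.filter (fun i => τ i ≠ 1 ∧ τ i < 2)).Nonempty :=
      ⟨j, by simp [hj1, hj2]⟩
    set Q := Finset.univ.filter (fun i => τ i ≠ 1 ∧ τ i < 2) with hQdef
    set τs := Q.inf' hQne τ with hτsdef
    have hτs1 : 1 < τs := by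
      rw [hτsdef, Finset.lt_inf'_iff]
      intro i hi
      rw [hQdef, Finset.mem_filter] at hi
      exact lt_of_le_of_ne (hτ1 i) (Ne.symm hi.2.1)
    have hτs2 : τs < 2 := by
      refine lt_of_le_of_lt (Finset.inf'_le _ (by simp [hQdef, hj1, hj2] : j ∈ Q)) hj2
    have hQge : ∀ i ∈ Q, τs ≤ τ i := fun i hi => Finset.inf'_le τ hi
    set m2 := Finset.univ.inf' huniv (fun i => if τs < τ i then min (τ i) 2 else 2)
      with hm2def
    have hm21 : τs < m2 := by
      rw [hm2def, Finset.lt_inf'_iff]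
      intro i _
      split
      · exact lt_min (by assumption) hτs2
      · exact hτs2
    have hm22 : m2 ≤ 2 := by
      refine le_trans (Finset.inf'_le _ hi0) ?_
      split
      · exact min_le_right _ _
      · exact le_rfl
    have hm2le : ∀ i, τs < τ i → m2 ≤ τ i := by
      intro i hi
      refine le_trans (Finset.inf'_le _ (Finset.mem_univ i)) ?_
      rw [if_pos hi]
      exact min_le_left _ _
    have hclass : ∀ i, τ i = 1 ∨ τ i = τs ∨ m2 ≤ τ i := by
      intro i
      by_cases h1 : τ i = 1
      · exact Or.inl h1
      rcases lt_or_ge τs (τ i) with h2 | h2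
      · exact Or.inr (Or.inr (hm2le i h2))
      · refine Or.inr (Or.inl ?_)
        have : i ∈ Q := by
          rw [hQdef, Finset.mem_filter]
          exact ⟨Finset.mem_univ i, h1, lt_of_le_of_lt h2 hτs2⟩
        exact le_antisymm h2 (hQge i this)
    set t := (τs + m2) / 2 with htdef
    have ht1 : 1 < t := by rw [htdef]; linarith
    have hts : τs < t := by rw [htdef]; linarith
    have htm : t < m2 := by rw [htdef]; linarith
    have ht2 : t < 2 := by linarith
    have ht0 : (0:ℝ) < t := by linarith
    have hsum := heq t ht0
    rw [tenTilePdf_one_two ht1.le ht2] at hsum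
    rw [← Finset.sum_filter_add_sum_filter_not Finset.univ (fun i => τ i = 1)] at hsum
    rw [← Finset.sum_filter_add_sum_filter_not
      (Finset.univ.filter (fun i => ¬ τ i = 1)) (fun i => τ i = τs)] at hsum
    have e1 : ∑ i ∈ Finset.univ.filter (fun i => τ i = 1), α i * hallPdf (t / τ i)
        = A * (2 * Real.log t / t ^ 2) := by
      rw [hAdef, Finset.sum_mul]
      refine Finset.sum_congr rfl fun i hi => ?_
      rw [Finset.mem_filter] at hi
      rw [hi.2, div_one, hallPdf_of_lt_four ht1.le (by linarith)]
    have e3 : ∑ i ∈ (Finset.univ.filter (fun i => ¬ τ i = 1)).filter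
          (fun i => ¬ τ i = τs), α i * hallPdf (t / τ i) = 0 := by
      apply Finset.sum_eq_zero
      intro i hi
      rw [Finset.mem_filter, Finset.mem_filter] at hi
      have hge : m2 ≤ τ i := by
        rcases hclass i with h | h | h
        · exact absurd h hi.1.2
        · exact absurd h hi.2
        · exact h
      have hle : t / τ i ≤ 1 := by
        rw [div_le_one (hτ i)]
        linarith
      rw [hallPdf_of_le_one hle, mul_zero]
    have hts1 : 1 < t / τs := (one_lt_div (by linarith)).mpr hts
    have hts4 : t / τs < 4 := by
      rw [div_lt_iff₀ (by linarith)]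
      nlinarith
    have e2 : ∑ i ∈ (Finset.univ.filter (fun i => ¬ τ i = 1)).filter
          (fun i => τ i = τs), α i * hallPdf (t / τ i)
        = (∑ i ∈ (Finset.univ.filter (fun i => ¬ τ i = 1)).filter
          (fun i => τ i = τs), α i) * (2 * Real.log (t / τs) / (t / τs) ^ 2) := by
      rw [Finset.sum_mul]
      refine Finset.sum_congr rfl fun i hi => ?_
      rw [Finset.mem_filter] at hi
      rw [hi.2, hallPdf_of_lt_four hts1.le hts4]
    rw [e1, e2, e3, add_zero] at hsum
    obtain ⟨j0, hj0Q, hj0⟩ := Finset.exists_mem_eq_inf' hQne τ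
    have hj0mem : j0 ∈ (Finset.univ.filter (fun i => ¬ τ i = 1)).filter
        (fun i => τ i = τs) := by
      rw [Finset.mem_filter, Finset.mem_filter]
      rw [hQdef, Finset.mem_filter] at hj0Q
      exact ⟨⟨Finset.mem_univ j0, hj0Q.2.1⟩, hj0.symm⟩
    have hBpos : 0 < ∑ i ∈ (Finset.univ.filter (fun i => ¬ τ i = 1)).filter
        (fun i => τ i = τs), α i :=
      Finset.sum_pos (fun i _ => hα i) ⟨j0, hj0mem⟩
    have hcpos : 0 < 2 * Real.log (t / τs) / (t / τs) ^ 2 := by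
      have := Real.log_pos hts1
      positivity
    have h8 : 8 / (33 * t ^ 2) * (4 * Real.log t)
        = (16:ℝ)/33 * (2 * Real.log t / t ^ 2) := by
      field_simp
      ring
    rw [h8, hA] at hsum
    nlinarith [mul_pos hBpos hcpos]
  -- Step D : the functional equation near 16/3
  set u := Finset.univ.inf' huniv (fun i => if 16/3 < τ i then min (τ i) 6 else 6)
    with hudef
  have hu1 : 16/3 < u := by
    rw [hudef, Finset.lt_inf'_iff]
    intro i _
    split
    · exact lt_min (by assumption) (by norm_num)
    · norm_num
  have hu2 : u ≤ 6 := by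
    refine le_trans (Finset.inf'_le _ hi0) ?_
    split
    · exact min_le_right _ _
    · exact le_rfl
  have hule : ∀ i, 16/3 < τ i → u ≤ τ i := by
    intro i hi
    refine le_trans (Finset.inf'_le _ (Finset.mem_univ i)) ?_
    rw [if_pos hi]
    exact min_le_left _ _
  set S := (Finset.univ.filter (fun i => ¬ τ i = 1)).filter (fun i => τ i ≤ 16/3)
    with hSdef
  set B := ∑ i ∈ S, α i * τ i ^ 2 with hBdef
  set L := ∑ i ∈ S, α i * τ i ^ 2 * Real.log (τ i) with hLdef
  set K := 3 - 33/16 * B with hKdef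
  set C := 33/16 * L - 5/2 * Real.log 2 - 3/4 * Real.log 3 with hCdef
  have key : ∀ t : ℝ, 16/3 < t → t < u →
      tenTheta (3 * t / 16) = K * Real.log t + C := by
    intro t hta htb
    have ht0 : (0:ℝ) < t := by linarith
    have ht0' : t ≠ 0 := ht0.ne'
    have hsum := heq t ht0
    rw [tenTilePdf_main hta (by linarith)] at hsum
    rw [← Finset.sum_filter_add_sum_filter_not Finset.univ (fun i => τ i = 1)] at hsum
    rw [← Finset.sum_filter_add_sum_filter_not
      (Finset.univ.filter (fun i => ¬ τ i = 1)) (fun i => τ i ≤ 16/3)] at hsum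
    have e1 : ∑ i ∈ Finset.univ.filter (fun i => τ i = 1), α i * hallPdf (t / τ i)
        = A * (2 * Real.log t / t ^ 2 - 4 / t ^ 2 * tenTheta (t / 4)) := by
      rw [hAdef, Finset.sum_mul]
      refine Finset.sum_congr rfl fun i hi => ?_
      rw [Finset.mem_filter] at hi
      rw [hi.2, div_one, hallPdf_of_four_le (by linarith)]
    have e2 : ∑ i ∈ S, α i * hallPdf (t / τ i)
        = 2 * Real.log t / t ^ 2 * B - 2 / t ^ 2 * L := by
      rw [hBdef, hLdef, Finset.mul_sum, Finset.mul_sum, ← Finset.sum_sub_distrib]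
      refine Finset.sum_congr rfl fun i hi => ?_
      rw [hSdef, Finset.mem_filter, Finset.mem_filter] at hi
      have h2i : 2 ≤ τ i := by
        rcases hC i with h | h
        · exact absurd h hi.1.2
        · exact h
      have hi0' : (0:ℝ) < τ i := hτ i
      have hone : 1 ≤ t / τ i := by
        rw [le_div_iff₀ hi0']
        have := hi.2
        linarith
      have hfour : t / τ i < 4 := by
        rw [div_lt_iff₀ hi0']
        nlinarith
      exact hall_term (hα i).le hi0' ht0 hone hfour
    have e3 : ∑ i ∈ (Finset.univ.filter (fun i => ¬ τ i = 1)).filter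
          (fun i => ¬ τ i ≤ 16/3), α i * hallPdf (t / τ i) = 0 := by
      apply Finset.sum_eq_zero
      intro i hi
      rw [Finset.mem_filter, Finset.mem_filter] at hi
      push_neg at hi
      have hge : u ≤ τ i := hule i hi.2
      have hle : t / τ i ≤ 1 := by
        rw [div_le_one (hτ i)]
        linarith
      rw [hallPdf_of_le_one hle, mul_zero]
    rw [e1, ← hSdef, e2, e3, add_zero, hA] at hsum
    rw [hKdef, hCdef]
    exact keyAlgebra ht0' hsum
  -- Step E : the contradiction
  set d := 3 * u / 16 - 1 with hddef
  have hd0 : 0 < d := by rw [hddef]; linarith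
  have hd8 : d ≤ 1/8 := by rw [hddef]; linarith
  set C1 := K * Real.log (16/3) + C with hC1def
  have key2 : ∀ s : ℝ, 1 < s → s < 1 + d → tenTheta s = K * Real.log s + C1 := by
    intro s hs1 hs2
    have h1 : (16:ℝ)/3 < 16 * s / 3 := by linarith
    have h2 : 16 * s / 3 < u := by rw [hddef] at hs2; linarith
    have h := key (16 * s / 3) h1 h2
    have h3 : 3 * (16 * s / 3) / 16 = s := by ring
    rw [h3] at h
    have h4 : Real.log (16 * s / 3) = Real.log (16/3) + Real.log s := by
      rw [show 16 * s / 3 = (16/3) * s by ring,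
        Real.log_mul (by norm_num) (by linarith)]
    rw [h4] at h
    rw [h, hC1def]
    ring
  set M := max K 0 with hMdef
  have hM0 : 0 ≤ M := le_max_right _ _
  have upper : ∀ s s' : ℝ, 1 < s' → s' < s → s < 1 + d →
      tenTheta s ≤ tenTheta s' + M * (s - 1) := by
    intro s s' hs'1 hs's hsd
    have hs1 : 1 < s := lt_trans hs'1 hs's
    have h1 := key2 s hs1 hsd
    have h2 := key2 s' hs'1 (lt_trans hs's hsd)
    have hlog : Real.log s' ≤ Real.log s := Real.log_le_log (by linarith) hs's.le
    have hlog0 : 0 ≤ Real.log s' := Real.log_nonneg hs'1.le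
    have hlogs : Real.log s ≤ s - 1 := by
      have := Real.log_le_sub_one_of_pos (show (0:ℝ) < s by linarith)
      linarith
    have hKM : K * (Real.log s - Real.log s') ≤ M * (Real.log s - Real.log s') :=
      mul_le_mul_of_nonneg_right (le_max_left _ _) (by linarith)
    have : tenTheta s - tenTheta s' = K * (Real.log s - Real.log s') := by
      rw [h1, h2]; ring
    nlinarith [mul_le_mul_of_nonneg_left hlogs hM0, mul_nonneg hM0 hlog0]
  set e := min (d/2) (min (1/4) (1/(100 * (M+1)^2))) with hedef
  have he0 : 0 < e := by
    rw [hedef]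
    have : (0:ℝ) < 1/(100 * (M+1)^2) := by positivity
    simp only [lt_min_iff]
    refine ⟨by linarith, by norm_num, this⟩
  have heM : e ≤ 1/(100 * (M+1)^2) := le_trans (min_le_right _ _) (min_le_right _ _)
  have hed : e ≤ d/2 := min_le_left _ _
  have he4 : e ≤ 1/4 := le_trans (min_le_right _ _) (min_le_left _ _)
  set s := 1 + e with hsdef
  have hs1 : 1 < s := by rw [hsdef]; linarith
  have hsd : s < 1 + d := by
    rw [hsdef]
    have : e < d := lt_of_le_of_lt hed (by linarith)
    linarith
  have hclaim : tenTheta s ≤ M * e := by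
    apply le_of_forall_pos_le_add
    intro ε hε
    set s' := 1 + min (e/2) (ε^2/4) with hs'def
    have hmin0 : 0 < min (e/2) (ε^2/4) := by
      simp only [lt_min_iff]
      constructor <;> positivity
    have hs'1 : 1 < s' := by rw [hs'def]; linarith
    have hs's : s' < s := by
      rw [hs'def, hsdef]
      have : min (e/2) (ε^2/4) ≤ e/2 := min_le_left _ _
      linarith
    have h1 := upper s s' hs'1 hs's hsd
    have h2 : tenTheta s' ≤ 2 * Real.sqrt (s' - 1) := by
      apply tenTheta_upper hs'1
      rw [hs'def]
      have : min (e/2) (ε^2/4) ≤ e/2 := min_le_left _ _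
      linarith
    have h3 : Real.sqrt (s' - 1) ≤ ε / 2 := by
      rw [hs'def]
      simp only [add_sub_cancel_left]
      calc Real.sqrt (min (e/2) (ε^2/4)) ≤ Real.sqrt (ε^2/4) :=
            Real.sqrt_le_sqrt (min_le_right _ _)
      _ = ε / 2 := by
          rw [show ε^2/4 = (ε/2)^2 by ring, Real.sqrt_sq (by positivity)]
    have hse : s - 1 = e := by rw [hsdef]; ring
    rw [hse] at h1
    linarith
  have hlower : Real.sqrt (e/2) / 2 ≤ tenTheta s := by
    have := tenTheta_lower hs1 (by rw [hsdef]; linarith)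
    rw [hsdef] at this ⊢
    simpa using this
  have hq : Real.sqrt (e/2) ^ 2 = e/2 := Real.sq_sqrt (by positivity)
  have hq0 : 0 < Real.sqrt (e/2) := Real.sqrt_pos.mpr (by positivity)
  have hfinal : Real.sqrt (e/2) / 2 ≤ M * e := le_trans hlower hclaim
  have hMe : e * (100 * (M+1)^2) ≤ 1 := by
    rw [← le_div_iff₀ (by positivity)]
    exact heM
  have h1 : Real.sqrt (e/2) ≤ 2 * (M * e) := by linarith
  have h2 : e/2 ≤ 4 * (M*e)^2 := by nlinarith [mul_self_le_mul_self hq0.le h1]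
  have h3 : 1 ≤ 8 * M^2 * e := by nlinarith [mul_pos he0 he0]
  have hM2 : M^2 ≤ (M+1)^2 := by nlinarith
  have h5 : M^2 * e ≤ (M+1)^2 * e := mul_le_mul_of_nonneg_right hM2 he0.le
  nlinarith
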